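/- Let k be an algebraically closed field of characteristic 2, let m ≥ 1 and let e be a nilpotent m×m matrix over k. Then there exist an m×m matrix h over k and a scalar c ∈ k such that ⁅h,e⁆ = e + c•1, where 1 is the identity matrix. (Equivalently, in the projective general linear Lie algebra pgl_m(k) = gl_m(k)/k·1, the image of every nilpotent element e admits an element h with ⁅h,e⁆ = e.) -/

import Mathlib

open Matrix LinearMap

section aux
variable {k : Type*} [Field k] {m : ℕ}

private lemma trace_mul_stdBasis (F : Matrix (Fin m) (Fin m) k) (i j : Fin m) (c : k) :
    Matrix.trace (F * Matrix.single i j c) = F j i * c := by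
  classical
  simp [Matrix.trace, Matrix.mul_apply, Matrix.single, Matrix.diag, ite_and,
    Finset.sum_ite_eq, mul_comm]

private lemma phi_eq_trace (φ : Module.Dual k (Matrix (Fin m) (Fin m) k))
    (x : Matrix (Fin m) (Fin m) k) :
    φ x = Matrix.trace ((Matrix.of fun i j => φ (Matrix.single j i 1)) * x) := by
  classical
  set F := Matrix.of fun i j => φ (Matrix.single j i (1:k)) with hF
  conv_lhs => rw [Matrix.matrix_eq_sum_single x]
  conv_rhs => rw [Matrix.matrix_eq_sum_single x]
  rw [map_sum, Finset.mul_sum, Matrix.trace_sum]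
  refine Finset.sum_congr rfl fun i _ => ?_
  rw [map_sum, Finset.mul_sum, Matrix.trace_sum]
  refine Finset.sum_congr rfl fun j _ => ?_
  rw [trace_mul_stdBasis]
  have : Matrix.single i j (x i j) = x i j • Matrix.single i j (1:k) := by
    rw [Matrix.smul_single, smul_eq_mul, mul_one]
  rw [this, _root_.map_smul, smul_eq_mul, hF]
  simp [mul_comm]

private lemma eq_zero_of_trace_mul (G : Matrix (Fin m) (Fin m) k)
    (h : ∀ x, Matrix.trace (G * x) = 0) : G = 0 := by
  ext i j
  have := h (Matrix.single j i 1)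
  rw [trace_mul_stdBasis, mul_one] at this
  simpa using this

end aux

/-- For every nilpotent `m×m` matrix `e` over an algebraically closed field
of characteristic 2 there exist a matrix `h` and a scalar `c` with `⁅h,e⁆ = e + c•1`;
equivalently, in `pgl_m(k)` every nilpotent element `e` admits `h` with `⁅h,e⁆ = e`. -/
theorem stmt_7 (k : Type*) [Field k] [IsAlgClosed k] [CharP k 2]
    (m : ℕ) (hm : 1 ≤ m)
    (e : Matrix (Fin m) (Fin m) k) (he : IsNilpotent e) :
    ∃ (h : Matrix (Fin m) (Fin m) k) (c : k),
      ⁅h, e⁆ = e + c • (1 : Matrix (Fin m) (Fin m) k) := by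
  classical
  set T : Matrix (Fin m) (Fin m) k →ₗ[k] Matrix (Fin m) (Fin m) k :=
    LinearMap.mulRight k e - LinearMap.mulLeft k e with hT
  have key : e ∈ LinearMap.range T := by
    rw [← Subspace.forall_mem_dualAnnihilator_apply_eq_zero_iff (LinearMap.range T) e]
    intro φ hφ
    rw [Submodule.mem_dualAnnihilator] at hφ
    set F := Matrix.of fun i j => φ (Matrix.single j i (1:k)) with hF
    have hcomm : e * F = F * e := by
      have h0 : ∀ x, Matrix.trace ((e * F - F * e) * x) = 0 := by
        intro x
        have := hφ (T x) ⟨x, rfl⟩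
        rw [phi_eq_trace φ] at this
        rw [Matrix.sub_mul, Matrix.trace_sub]
        rw [hT] at this
        simp only [LinearMap.sub_apply, LinearMap.mulRight_apply, LinearMap.mulLeft_apply] at this
        rw [Matrix.mul_sub, Matrix.trace_sub] at this
        rw [← hF] at this
        have h1 : Matrix.trace (e * F * x) = Matrix.trace (F * (x * e)) := by
          rw [Matrix.mul_assoc, Matrix.trace_mul_comm e (F * x), Matrix.mul_assoc]
        have h2 : Matrix.trace (F * e * x) = Matrix.trace (F * (e * x)) := by
          rw [Matrix.mul_assoc]
        rw [h1, h2]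
        exact this
      have := eq_zero_of_trace_mul (e * F - F * e) h0
      linear_combination (norm := (ext i j; simp)) this
    rw [phi_eq_trace φ e, ← hF]
    have hnil : IsNilpotent (F * e) := by
      have hc : Commute F e := hcomm.symm
      exact hc.isNilpotent_mul_left he
    exact (Matrix.isNilpotent_trace_of_isNilpotent hnil).eq_zero
  obtain ⟨h, hh⟩ := key
  refine ⟨h, 0, ?_⟩
  rw [zero_smul, add_zero, Ring.lie_def]
  rw [hT] at hh
  simpa using hh
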